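/- Consider the random coordinate descent iteration x⁺ = x + U_i d_i, where the block index i is chosen uniformly at random from {1,…,N} and d_i minimizes f(x) + ⟨∇_i f(x), s⟩ + (L_i/2)‖s‖² + h_i(x_i + s). Then the conditional expectation satisfies E[F(x⁺) | x] ≤ (1 − 1/N) F(x) + (1/N) ψ_L(d_L(x); x), where ψ_L(s; x) = f(x) + ⟨∇f(x), s⟩ + (1/2)‖s‖_L² + h(x + s) and d_L(x) is its minimizer. -/

import Mathlib

open scoped BigOperators RealInnerProductSpace
open Finset Filter

noncomputable section


/-- The ambient space `ℝ^n` with the Euclidean norm. -/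
abbrev En (n : ℕ) := EuclideanSpace ℝ (Fin n)

/-- Projection onto block `i` of the block decomposition of `ℝ^n` given by the
block-index map `blk : Fin n → Fin N`; it realizes `U_i U_iᵀ y`. -/
def blockProj {n N : ℕ} (blk : Fin n → Fin N) (i : Fin N) (y : En n) : En n :=
  WithLp.toLp 2 (fun j => if blk j = i then y j else 0)

/-- The squared block norm `‖x‖_L² = ∑ i, L i ‖x_i‖²`. -/
def blockNormSq {n N : ℕ} (blk : Fin n → Fin N) (L : Fin N → ℝ) (x : En n) : ℝ :=
  ∑ i, L i * ‖blockProj blk i x‖ ^ 2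

lemma inner_blockProj {n N : ℕ} (blk : Fin n → Fin N) (i : Fin N) (y s : En n)
    (hs : ∀ j, blk j ≠ i → s j = 0) :
    ⟪y, s⟫ = ⟪blockProj blk i y, s⟫ := by
  simp only [PiLp.inner_apply, RCLike.inner_apply, blockProj, conj_trivial]
  refine Finset.sum_congr rfl fun j _ => ?_
  by_cases hj : blk j = i
  · simp [hj]
  · simp [hj, hs j hj]

lemma sum_blockProj {n N : ℕ} (blk : Fin n → Fin N) (y : En n) :
    ∑ i, blockProj blk i y = y := by
  ext j
  change (∑ i, blockProj blk i y) j = y j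
  rw [WithLp.ofLp_sum, Finset.sum_apply]
  simp [blockProj]

lemma descent {n N : ℕ} (blk : Fin n → Fin N) (L : Fin N → ℝ)
    (f : En n → ℝ) (g : En n → En n) (hg : ∀ x, HasGradientAt f (g x) x)
    (hlip : ∀ (i : Fin N) (x s : En n), (∀ j, blk j ≠ i → s j = 0) →
      ‖blockProj blk i (g (x + s)) - blockProj blk i (g x)‖ ≤ L i * ‖s‖)
    (i : Fin N) (x s : En n) (hs : ∀ j, blk j ≠ i → s j = 0) :
    f (x + s) ≤ f x + ⟪g x, s⟫ + L i / 2 * ‖s‖ ^ 2 := by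
  set φ : ℝ → ℝ := fun t => f (x + t • s) - t * ⟪g x, s⟫ - L i / 2 * t ^ 2 * ‖s‖ ^ 2 with hφ
  have hline : ∀ t : ℝ, HasDerivAt (fun t : ℝ => x + t • s) s t := by
    intro t
    simpa using ((hasDerivAt_id t).smul_const s).const_add x
  have hderiv : ∀ t : ℝ,
      HasDerivAt φ (⟪g (x + t • s), s⟫ - ⟪g x, s⟫ - L i * t * ‖s‖ ^ 2) t := by
    intro t
    have h1 : HasDerivAt (fun t : ℝ => f (x + t • s)) ⟪g (x + t • s), s⟫ t := by
      have := ((hg (x + t • s)).hasFDerivAt.comp_hasDerivAt t (hline t))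
      simpa [InnerProductSpace.toDual_apply_apply, Function.comp_def] using this
    have h2 : HasDerivAt (fun t : ℝ => t * ⟪g x, s⟫) ⟪g x, s⟫ t := by
      simpa using (hasDerivAt_id t).mul_const ⟪g x, s⟫
    have h3 : HasDerivAt (fun t : ℝ => L i / 2 * t ^ 2 * ‖s‖ ^ 2)
        (L i * t * ‖s‖ ^ 2) t := by
      have := ((hasDerivAt_pow 2 t).const_mul (L i / 2)).mul_const (‖s‖ ^ 2)
      refine this.congr_deriv ?_
      rw [show (2:ℕ) - 1 = 1 from rfl]
      push_cast
      ring
    exact (h1.sub h2).sub h3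
  have hanti : AntitoneOn φ (Set.Icc (0:ℝ) 1) := by
    apply antitoneOn_of_deriv_nonpos (convex_Icc 0 1)
    · exact (fun t ht => ((hderiv t).differentiableAt).continuousAt.continuousWithinAt)
    · exact fun t ht => ((hderiv t).differentiableAt).differentiableWithinAt
    · intro t ht
      rw [interior_Icc] at ht
      rw [(hderiv t).deriv]
      have hts : ∀ j, blk j ≠ i → (t • s) j = 0 := by
        intro j hj
        have : (t • s) j = t * s j := rfl
        rw [this, hs j hj, mul_zero]
      have key : ⟪g (x + t • s), s⟫ - ⟪g x, s⟫
          = ⟪blockProj blk i (g (x + t • s)) - blockProj blk i (g x), s⟫ := by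
        rw [inner_sub_left, inner_blockProj blk i (g (x + t • s)) s hs,
          inner_blockProj blk i (g x) s hs]
      have hb := real_inner_le_norm (blockProj blk i (g (x + t • s)) - blockProj blk i (g x)) s
      have hl := hlip i x (t • s) hts
      have hns : ‖t • s‖ = t * ‖s‖ := by
        rw [norm_smul, Real.norm_eq_abs, abs_of_nonneg ht.1.le]
      have hl2 : ‖blockProj blk i (g (x + t • s)) - blockProj blk i (g x)‖ * ‖s‖
          ≤ L i * ‖t • s‖ * ‖s‖ := mul_le_mul_of_nonneg_right hl (norm_nonneg s)
      rw [hns] at hl2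
      nlinarith [hb, hl2]
  have h01 := hanti (Set.mem_Icc.2 ⟨le_refl 0, zero_le_one⟩)
    (Set.mem_Icc.2 ⟨zero_le_one, le_refl 1⟩) zero_le_one
  have e0 : φ 0 = f x := by
    simp only [hφ, zero_smul, add_zero]
    ring
  have e1 : φ 1 = f (x + s) - ⟪g x, s⟫ - L i / 2 * ‖s‖ ^ 2 := by
    simp only [hφ, one_smul, one_pow, one_mul, mul_one]
  rw [e0, e1] at h01
  linarith
/-- One step of the 1-random coordinate descent method with uniform block
selection: if `d i` (supported on block `i`) minimizes the block quadratic model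
`s ↦ f(x) + ⟨∇_i f(x), s⟩ + (L_i/2)‖s‖² + h_i(x_i + s)` and `dL` minimizes
`ψ_L(s; x) = f(x) + ⟨∇f(x), s⟩ + (1/2)‖s‖_L² + h(x+s)`, then the conditional expectation
of `F(x⁺) = F(x + U_i d_i)` over the uniformly random block `i` (which equals the average
`(1/N) ∑ i F(x + d i)`) satisfies
`E[F(x⁺) | x] ≤ (1 − 1/N) F(x) + (1/N) ψ_L(dL; x)`. -/
theorem stmt5 {n N : ℕ} (hN : 0 < N) (blk : Fin n → Fin N)
    (L : Fin N → ℝ) (hL : ∀ i, 0 < L i)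
    (f h : En n → ℝ) (g : En n → En n) (hg : ∀ x, HasGradientAt f (g x) x)
    (hlip : ∀ (i : Fin N) (x s : En n), (∀ j, blk j ≠ i → s j = 0) →
      ‖blockProj blk i (g (x + s)) - blockProj blk i (g x)‖ ≤ L i * ‖s‖)
    (H : Fin N → En n → ℝ) (hHconv : ∀ k, ConvexOn ℝ Set.univ (H k))
    (hsep : ∀ x, h x = ∑ k, H k (blockProj blk k x)) (hcont : Continuous h)
    (x : En n) (d : Fin N → En n)
    (hdsupp : ∀ i j, blk j ≠ i → d i j = 0)
    (hdmin : ∀ (i : Fin N) (s : En n), (∀ j, blk j ≠ i → s j = 0) →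
      f x + ⟪g x, d i⟫ + L i / 2 * ‖d i‖ ^ 2 + h (x + d i) ≤
      f x + ⟪g x, s⟫ + L i / 2 * ‖s‖ ^ 2 + h (x + s))
    (dL : En n)
    (hdL : ∀ s : En n,
      f x + ⟪g x, dL⟫ + (1 / 2) * blockNormSq blk L dL + h (x + dL) ≤
      f x + ⟪g x, s⟫ + (1 / 2) * blockNormSq blk L s + h (x + s)) :
    (N : ℝ)⁻¹ * ∑ i, (f (x + d i) + h (x + d i)) ≤
      (1 - 1 / N) * (f x + h x) +
      (1 / N) * (f x + ⟪g x, dL⟫ + (1 / 2) * blockNormSq blk L dL + h (x + dL)) := by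
  classical
  set p : Fin N → En n := fun i => blockProj blk i dL with hp
  have hpsupp : ∀ i j, blk j ≠ i → p i j = 0 := by
    intro i j hj
    simp [hp, blockProj, hj]
  -- pointwise bound
  have step : ∀ i, f (x + d i) + h (x + d i) ≤
      f x + ⟪g x, p i⟫ + L i / 2 * ‖p i‖ ^ 2 + h (x + p i) := by
    intro i
    have h1 := descent blk L f g hg hlip i x (d i) (fun j hj => hdsupp i j hj)
    have h2 := hdmin i (p i) (hpsupp i)
    linarith
  -- block projection of shifted point
  have hbp : ∀ i k : Fin N, blockProj blk k (x + p i) =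
      if k = i then blockProj blk i (x + dL) else blockProj blk k x := by
    intro i k
    ext j
    by_cases hk : k = i
    · subst hk
      simp only [if_true]
      change (if blk j = k then (x + p k) j else 0) = (if blk j = k then (x + dL) j else 0)
      by_cases hj : blk j = k
      · simp only [hj, if_true]
        change x j + p k j = x j + dL j
        simp [hp, blockProj, hj]
      · simp [hj]
    · simp only [hk, if_false]
      change (if blk j = k then (x + p i) j else 0) = (if blk j = k then x j else 0)
      by_cases hj : blk j = k
      · simp only [hj, if_true]
        change x j + p i j = x j
        have : blk j ≠ i := by rw [hj]; exact hk
        rw [hpsupp i j this, add_zero]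
      · simp [hj]
  -- h at shifted point
  have hsh : ∀ i, h (x + p i) = h x + (H i (blockProj blk i (x + dL)) - H i (blockProj blk i x)) := by
    intro i
    rw [hsep (x + p i), hsep x]
    have : ∀ k : Fin N, H k (blockProj blk k (x + p i)) =
        H k (blockProj blk k x) +
          (if k = i then H i (blockProj blk i (x + dL)) - H i (blockProj blk i x) else 0) := by
      intro k
      rw [hbp i k]
      by_cases hk : k = i
      · subst hk; simp
      · simp [hk]
    rw [Finset.sum_congr rfl (fun k _ => this k), Finset.sum_add_distrib,
      Finset.sum_ite_eq' Finset.univ i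
        (fun _ => H i (blockProj blk i (x + dL)) - H i (blockProj blk i x))]
    simp
  -- sum the bound
  have hsum : ∑ i, (f (x + d i) + h (x + d i)) ≤
      (N : ℝ) * f x + ⟪g x, dL⟫ + (1 / 2) * blockNormSq blk L dL +
        ((N : ℝ) * h x - h x + h (x + dL)) := by
    calc ∑ i, (f (x + d i) + h (x + d i))
        ≤ ∑ i, (f x + ⟪g x, p i⟫ + L i / 2 * ‖p i‖ ^ 2 + h (x + p i)) :=
          Finset.sum_le_sum fun i _ => step i
      _ = (N : ℝ) * f x + ⟪g x, dL⟫ + (1 / 2) * blockNormSq blk L dL +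
          ((N : ℝ) * h x - h x + h (x + dL)) := by
          have e1 : ∑ i, ⟪g x, p i⟫ = ⟪g x, dL⟫ := by
            rw [← inner_sum]
            congr 1
            exact sum_blockProj blk dL
          have e2 : ∑ i, L i / 2 * ‖p i‖ ^ 2 = (1 / 2) * blockNormSq blk L dL := by
            rw [blockNormSq, Finset.mul_sum]
            exact Finset.sum_congr rfl fun i _ => by ring
          have e3 : ∑ i, h (x + p i) = (N : ℝ) * h x - h x + h (x + dL) := by
            rw [Finset.sum_congr rfl (fun i _ => hsh i), Finset.sum_add_distrib,
              Finset.sum_sub_distrib]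
            have : ∑ i, H i (blockProj blk i (x + dL)) = h (x + dL) := (hsep (x + dL)).symm
            have h2 : ∑ i, H i (blockProj blk i x) = h x := (hsep x).symm
            rw [this, h2, Finset.sum_const, Finset.card_univ, Fintype.card_fin, nsmul_eq_mul]
            ring
          rw [Finset.sum_add_distrib, Finset.sum_add_distrib, Finset.sum_add_distrib,
            e1, e2, e3]
          rw [Finset.sum_const, Finset.card_univ, Fintype.card_fin, nsmul_eq_mul]
  -- final algebra
  have hNpos : (0 : ℝ) < (N : ℝ) := Nat.cast_pos.mpr hN
  have hNne : (N : ℝ) ≠ 0 := ne_of_gt hNpos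
  have := mul_le_mul_of_nonneg_left hsum (inv_nonneg.mpr hNpos.le)
  calc (N : ℝ)⁻¹ * ∑ i, (f (x + d i) + h (x + d i))
      ≤ (N : ℝ)⁻¹ * ((N : ℝ) * f x + ⟪g x, dL⟫ + (1 / 2) * blockNormSq blk L dL +
        ((N : ℝ) * h x - h x + h (x + dL))) := this
    _ = (1 - 1 / N) * (f x + h x) +
        (1 / N) * (f x + ⟪g x, dL⟫ + (1 / 2) * blockNormSq blk L dL + h (x + dL)) := by
        field_simp
        ring
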